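/- Let Ñ, S̃, T̃ > 0 be reals with S̃ ≤ T̃, and let (t̃, x̃) satisfy x̃ > 0, S̃+Ñ−x̃ > 0, t̃+Ñ−x̃ > 0 and x̃+T̃−S̃−t̃ > 0. Then the polynomial identity ( −Ñ(Ñ+T̃) + (S̃+Ñ−x̃)(t̃+Ñ−x̃) + x̃(T̃+x̃−S̃−t̃) )² − 4·x̃(S̃+Ñ−x̃)(t̃+Ñ−x̃)(x̃+T̃−S̃−t̃) = E(t̃,x̃) holds, where E(t̃,x̃) = T̃²x̃² + (S̃+Ñ)²t̃² + 2x̃t̃(ÑT̃−S̃T̃−2S̃Ñ) + 2t̃(S̃Ñ² − ÑT̃S̃ − Ñ²T̃ + S̃²Ñ) + 2x̃(ÑT̃S̃ − ÑT̃²) + Ñ²(T̃−S̃)². Consequently, with D = ( −Ñ(Ñ+T̃) + (S̃+Ñ−x̃)(t̃+Ñ−x̃) + x̃(T̃+x̃−S̃−t̃) ) / ( 2√( x̃(S̃+Ñ−x̃)(t̃+Ñ−x̃)(x̃+T̃−S̃−t̃) ) ), one has D² ≥ 1 if and only if E(t̃,x̃) ≥ 0: the limit density φ/π (φ = arccos D,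 clipped to 0 or π when |D| > 1) is trivial (equal to 0 or 1) exactly on and outside the ellipse E(t̃,x̃) = 0 inscribed in the hexagon, and nontrivial exactly in its interior E(t̃,x̃) < 0. -/
import Mathlib


/-- The quadratic polynomial whose zero set is the inscribed ellipse (frozen boundary). -/
noncomputable def ellipseE (Nt St Tt t x : ℝ) : ℝ :=
  Tt ^ 2 * x ^ 2 + (St + Nt) ^ 2 * t ^ 2 + 2 * x * t * (Nt * Tt - St * Tt - 2 * St * Nt)
    + 2 * t * (St * Nt ^ 2 - Nt * Tt * St - Nt ^ 2 * Tt + St ^ 2 * Nt)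
    + 2 * x * (Nt * Tt * St - Nt * Tt ^ 2) + Nt ^ 2 * (Tt - St) ^ 2

/-- The quantity `D` whose arccosine gives the angle `φ` of the discrete sine kernel. -/
noncomputable def Dval (Nt St Tt t x : ℝ) : ℝ :=
  (-(Nt * (Nt + Tt)) + (St + Nt - x) * (t + Nt - x) + x * (Tt + x - St - t)) /
    (2 * Real.sqrt (x * (St + Nt - x) * (t + Nt - x) * (x + Tt - St - t)))

/-- The angle `φ`: `arccos D` clipped to `0` when `D > 1` and to `π` when `D < −1`. -/
noncomputable def phiVal (Nt St Tt t x : ℝ) : ℝ :=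
  if 1 < Dval Nt St Tt t x then 0
  else if Dval Nt St Tt t x < -1 then Real.pi
  else Real.arccos (Dval Nt St Tt t x)

theorem stmt_15 (Nt St Tt t x : ℝ)
    (hN : 0 < Nt) (hS : 0 < St) (hT : 0 < Tt) (hST : St ≤ Tt)
    (hx : 0 < x) (h1 : 0 < St + Nt - x) (h2 : 0 < t + Nt - x) (h3 : 0 < x + Tt - St - t) :
    ((-(Nt * (Nt + Tt)) + (St + Nt - x) * (t + Nt - x) + x * (Tt + x - St - t)) ^ 2
        - 4 * (x * (St + Nt - x) * (t + Nt - x) * (x + Tt - St - t)) = ellipseE Nt St Tt t x)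
    ∧ (1 ≤ (Dval Nt St Tt t x) ^ 2 ↔ 0 ≤ ellipseE Nt St Tt t x)
    ∧ ((phiVal Nt St Tt t x = 0 ∨ phiVal Nt St Tt t x = Real.pi)
        ↔ 0 ≤ ellipseE Nt St Tt t x) := by
  set P : ℝ := x * (St + Nt - x) * (t + Nt - x) * (x + Tt - St - t) with hPdef
  have hP : 0 < P := by positivity
  set A : ℝ := -(Nt * (Nt + Tt)) + (St + Nt - x) * (t + Nt - x) + x * (Tt + x - St - t) with hA
  have hid : A ^ 2 - 4 * P = ellipseE Nt St Tt t x := by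
    simp only [hA, hPdef, ellipseE]; ring
  have hsq : Real.sqrt P > 0 := Real.sqrt_pos.mpr hP
  have hsqP : Real.sqrt P ^ 2 = P := Real.sq_sqrt hP.le
  have hD : Dval Nt St Tt t x = A / (2 * Real.sqrt P) := rfl
  have hD2 : (Dval Nt St Tt t x) ^ 2 = A ^ 2 / (4 * P) := by
    rw [hD, div_pow, mul_pow]; norm_num [hsqP]
  have hiff : 1 ≤ (Dval Nt St Tt t x) ^ 2 ↔ 0 ≤ ellipseE Nt St Tt t x := by
    rw [hD2, le_div_iff₀ (by positivity), ← hid, one_mul]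
    constructor <;> intro h <;> linarith
  refine ⟨hid, hiff, ?_⟩
  rw [← hiff]
  have habs : 1 ≤ (Dval Nt St Tt t x) ^ 2 ↔ 1 ≤ |Dval Nt St Tt t x| := by
    rw [← abs_one, ← sq_abs, abs_one]
    constructor <;> intro h
    · nlinarith [abs_nonneg (Dval Nt St Tt t x)]
    · nlinarith
  rw [habs, le_abs]
  unfold phiVal
  set D := Dval Nt St Tt t x with hDdef
  split_ifs with h1' h2'
  · exact ⟨fun _ => Or.inl (by linarith), fun _ => Or.inl rfl⟩
  · exact ⟨fun _ => Or.inr (by linarith), fun _ => Or.inr rfl⟩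
  · constructor
    · rintro (h | h)
      · left; exact Real.arccos_eq_zero.mp h
      · right; linarith [Real.arccos_eq_pi.mp h]
    · rintro (h | h)
      · left; exact Real.arccos_eq_zero.mpr h
      · right; exact Real.arccos_eq_pi.mpr (by linarith)
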